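/- (Proposition 5.) Fix a classifier δ ∈ [0,1]² and precision φ ∈ (1/2, 1]. If ρ(δ,φ) ≠ 0, then each of the maps r ↦ EU₁(r | γ) and r ↦ EU₀(r) is strictly quasiconcave on ℝ and attains its global maximum at a unique point r ∈ ℝ (an interior, i.e. finite, maximizer). If ρ(δ,φ) = 0 (δ is null), then both maps are constant in r, so every voter is indifferent between all reward levels. -/

import Mathlib

open MeasureTheory

/-- A cost distribution: a CDF `F` with continuously differentiable structure
given by a strictly positive, differentiable, log-concave density `f` with full
support on `ℝ`. -/
structure CostDist where
  F : ℝ → ℝ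
  f : ℝ → ℝ
  deriv_eq : ∀ x : ℝ, HasDerivAt F (f x) x
  f_pos : ∀ x : ℝ, 0 < f x
  f_diff : Differentiable ℝ f
  f_logConcave : ConcaveOn ℝ Set.univ fun x => Real.log (f x)
  tendsto_bot : Filter.Tendsto F Filter.atBot (nhds 0)
  tendsto_top : Filter.Tendsto F Filter.atTop (nhds 1)



lemma unimodal_max' {G : ℝ → ℝ} {x0 : ℝ} (hmono : StrictMonoOn G (Set.Iic x0))
    (hanti : StrictAntiOn G (Set.Ici x0)) : ∃! r : ℝ, ∀ r' : ℝ, G r' ≤ G r := by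
  have hmax : ∀ r', G r' ≤ G x0 := by
    intro r'
    rcases lt_trichotomy r' x0 with h | h | h
    · exact (hmono (Set.mem_Iic.2 h.le) (Set.mem_Iic.2 le_rfl) h).le
    · rw [h]
    · exact (hanti (Set.mem_Ici.2 le_rfl) (Set.mem_Ici.2 h.le) h).le
  refine ⟨x0, hmax, fun r hr => ?_⟩
  by_contra hne
  rcases Ne.lt_or_gt hne with h | h
  · exact absurd (hr x0) (not_le.2 (hmono (Set.mem_Iic.2 h.le) (Set.mem_Iic.2 le_rfl) h))
  · exact absurd (hr x0) (not_le.2 (hanti (Set.mem_Ici.2 le_rfl) (Set.mem_Ici.2 h.le) h))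

lemma unimodal_key {G : ℝ → ℝ} {x0 : ℝ} (hmono : StrictMonoOn G (Set.Iic x0))
    (hanti : StrictAntiOn G (Set.Ici x0)) :
    ∀ x y : ℝ, x < y → ∀ z, x < z → z < y → min (G x) (G y) < G z := by
  intro x y hxy z hz1 hz2
  rcases le_or_gt z x0 with h | h
  · exact lt_of_le_of_lt (min_le_left _ _)
      (hmono (Set.mem_Iic.2 (hz1.le.trans h)) (Set.mem_Iic.2 h) hz1)
  · exact lt_of_le_of_lt (min_le_right _ _)
      (hanti (Set.mem_Ici.2 h.le) (Set.mem_Ici.2 (h.le.trans hz2.le)) hz2)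

lemma comp_unimodal {G : ℝ → ℝ} {x0 rr c : ℝ} (hr : rr ≠ 0)
    (hm : StrictMonoOn G (Set.Iic x0)) (ha : StrictAntiOn G (Set.Ici x0)) :
    ∃ r0 : ℝ, StrictMonoOn (fun r => c + G (r * rr)) (Set.Iic r0) ∧
      StrictAntiOn (fun r => c + G (r * rr)) (Set.Ici r0) := by
  rcases hr.lt_or_gt with h | h
  · refine ⟨x0 / rr, ?_, ?_⟩
    · intro r hrm s hsm hrs
      have hs' : x0 ≤ s * rr := (le_div_iff_of_neg h).1 hsm
      have hr' : x0 ≤ r * rr := (le_div_iff_of_neg h).1 hrm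
      have : s * rr < r * rr := mul_lt_mul_of_neg_right hrs h
      have := ha (Set.mem_Ici.2 hs') (Set.mem_Ici.2 hr') this
      simpa using add_lt_add_left this c
    · intro r hrm s hsm hrs
      have hr' : r * rr ≤ x0 := (div_le_iff_of_neg h).1 hrm
      have hs' : s * rr ≤ x0 := (div_le_iff_of_neg h).1 hsm
      have : s * rr < r * rr := mul_lt_mul_of_neg_right hrs h
      have := hm (Set.mem_Iic.2 hs') (Set.mem_Iic.2 hr') this
      simpa using add_lt_add_left this c
  · refine ⟨x0 / rr, ?_, ?_⟩
    · intro r hrm s hsm hrs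
      have hr' : r * rr ≤ x0 := (le_div_iff₀ h).1 hrm
      have hs' : s * rr ≤ x0 := (le_div_iff₀ h).1 hsm
      have : r * rr < s * rr := mul_lt_mul_of_pos_right hrs h
      have := hm (Set.mem_Iic.2 hr') (Set.mem_Iic.2 hs') this
      simpa using add_lt_add_left this c
    · intro r hrm s hsm hrs
      have hr' : x0 ≤ r * rr := (div_le_iff₀ h).1 hrm
      have hs' : x0 ≤ s * rr := (div_le_iff₀ h).1 hsm
      have : r * rr < s * rr := mul_lt_mul_of_pos_right hrs h
      have := ha (Set.mem_Ici.2 hr') (Set.mem_Ici.2 hs') this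
      simpa using add_lt_add_left this c


namespace CostDist

variable (D : CostDist)

lemma F_cont : Continuous D.F :=
  continuous_iff_continuousAt.2 fun x => (D.deriv_eq x).continuousAt

lemma f_cont : Continuous D.f := D.f_diff.continuous

lemma F_strictMono : StrictMono D.F :=
  strictMono_of_deriv_pos fun x => by rw [(D.deriv_eq x).deriv]; exact D.f_pos x

lemma F_pos (x : ℝ) : 0 < D.F x := by
  have h0 : (0:ℝ) ≤ D.F (x - 1) :=
    le_of_tendsto D.tendsto_bot
      (Filter.eventually_atBot.2 ⟨x - 1, fun a ha => D.F_strictMono.monotone ha⟩)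
  have := D.F_strictMono (show x - 1 < x by linarith)
  linarith

lemma F_lt_one (x : ℝ) : D.F x < 1 := by
  have h1 : D.F (x + 1) ≤ 1 :=
    ge_of_tendsto D.tendsto_top
      (Filter.eventually_atTop.2 ⟨x + 1, fun a ha => D.F_strictMono.monotone ha⟩)
  have := D.F_strictMono (show x < x + 1 by linarith)
  linarith

lemma spread {a b c d : ℝ} (hab : a ≤ b) (hac : a ≤ c) (h : b + c = a + d) :
    D.f a * D.f d ≤ D.f b * D.f c := by
  have had : a ≤ d := by linarith
  rcases eq_or_lt_of_le had with he | hlt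
  · have hb : b = a := le_antisymm (by linarith) hab
    have hc : c = a := le_antisymm (by linarith) hac
    rw [hb, hc, ← he]
  · set L : ℝ → ℝ := fun x => Real.log (D.f x) with hL
    set lam : ℝ := (d - b) / (d - a) with hlam
    have hda : 0 < d - a := by linarith
    have hlam0 : 0 ≤ lam := div_nonneg (by linarith) hda.le
    have hlam1 : lam ≤ 1 := (div_le_one hda).2 (by linarith)
    have hsum : lam + (1 - lam) = 1 := by ring
    have hb' : lam * a + (1 - lam) * d = b := by
      have hl : lam * (d - a) = d - b := by rw [hlam]; exact div_mul_cancel₀ _ hda.ne'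
      linear_combination -hl
    have hc' : (1 - lam) * a + lam * d = c := by
      have hce : c = a + d - b := by linarith
      have hl : lam * (d - a) = d - b := by rw [hlam]; exact div_mul_cancel₀ _ hda.ne'
      rw [hce]; linear_combination hl
    have h1 := D.f_logConcave.2 (Set.mem_univ a) (Set.mem_univ d) hlam0 (by linarith) hsum
    have h2 := D.f_logConcave.2 (Set.mem_univ a) (Set.mem_univ d) (by linarith : (0:ℝ) ≤ 1 - lam) hlam0 (by ring)
    simp only [smul_eq_mul] at h1 h2
    rw [hb'] at h1
    rw [hc'] at h2
    have hsumL : L a + L d ≤ L b + L c := by linarith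
    have hexp : Real.exp (L a + L d) ≤ Real.exp (L b + L c) := Real.exp_le_exp.2 hsumL
    rwa [Real.exp_add, Real.exp_add, Real.exp_log (D.f_pos a), Real.exp_log (D.f_pos d),
      Real.exp_log (D.f_pos b), Real.exp_log (D.f_pos c)] at hexp

lemma integral_f (a b : ℝ) : ∫ u in a..b, D.f u = D.F b - D.F a :=
  intervalIntegral.integral_eq_sub_of_hasDerivAt (fun x _ => D.deriv_eq x)
    (D.f_cont.intervalIntegrable a b)

lemma ratioF {x y : ℝ} (hxy : x ≤ y) : D.F x * D.f y ≤ D.F y * D.f x := by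
  have key : ∀ a : ℝ, a ≤ x → D.F x * D.f y ≤ D.F y * D.f x + D.F a * D.f y := by
    intro a ha
    have h1 : ∀ u ∈ Set.Icc a x, D.f u * D.f y ≤ D.f x * D.f (u + (y - x)) := by
      intro u hu
      exact D.spread (a := u) (b := x) (c := u + (y - x)) (d := y) hu.2 (by linarith) (by ring)
    have hint : ∫ u in a..x, D.f u * D.f y ≤ ∫ u in a..x, D.f x * D.f (u + (y - x)) := by
      refine intervalIntegral.integral_mono_on ha ?_ ?_ h1
      · exact ((D.f_cont.mul continuous_const).intervalIntegrable a x)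
      · exact ((continuous_const.mul (D.f_cont.comp (continuous_id.add continuous_const))).intervalIntegrable a x)
    have lhs : ∫ u in a..x, D.f u * D.f y = (D.F x - D.F a) * D.f y := by
      rw [intervalIntegral.integral_mul_const, D.integral_f]
    have rhs : ∫ u in a..x, D.f x * D.f (u + (y - x)) = D.f x * (D.F y - D.F (a + (y - x))) := by
      rw [intervalIntegral.integral_const_mul, intervalIntegral.integral_comp_add_right,
        show x + (y - x) = y by ring, D.integral_f]
    rw [lhs, rhs] at hint
    have hF0 := D.F_pos (a + (y - x))
    nlinarith [D.f_pos x]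
  have hlim : Filter.Tendsto (fun a => D.F y * D.f x + D.F a * D.f y) Filter.atBot
      (nhds (D.F y * D.f x)) := by
    have h := (D.tendsto_bot.mul_const (D.f y)).const_add (D.F y * D.f x)
    simpa using h
  exact ge_of_tendsto hlim (Filter.eventually_atBot.2 ⟨x, key⟩)

lemma ratio1mF {x y : ℝ} (hxy : x ≤ y) : (1 - D.F y) * D.f x ≤ (1 - D.F x) * D.f y := by
  have key : ∀ b : ℝ, y ≤ b → D.F b * D.f x ≤ (1 - D.F x) * D.f y + D.F y * D.f x := by
    intro b hb
    have h1 : ∀ v ∈ Set.Icc y b, D.f x * D.f v ≤ D.f y * D.f (v + (x - y)) := by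
      intro v hv
      exact D.spread (a := x) (b := y) (c := v + (x - y)) (d := v) hxy (by linarith [hv.1]) (by ring)
    have hint : ∫ v in y..b, D.f x * D.f v ≤ ∫ v in y..b, D.f y * D.f (v + (x - y)) := by
      refine intervalIntegral.integral_mono_on hb ?_ ?_ h1
      · exact ((continuous_const.mul D.f_cont).intervalIntegrable y b)
      · exact ((continuous_const.mul (D.f_cont.comp (continuous_id.add continuous_const))).intervalIntegrable y b)
    have lhs : ∫ v in y..b, D.f x * D.f v = D.f x * (D.F b - D.F y) := by
      rw [intervalIntegral.integral_const_mul, D.integral_f]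
    have rhs : ∫ v in y..b, D.f y * D.f (v + (x - y)) = D.f y * (D.F (b + (x - y)) - D.F x) := by
      rw [intervalIntegral.integral_const_mul, intervalIntegral.integral_comp_add_right,
        show y + (x - y) = x by ring, D.integral_f]
    rw [lhs, rhs] at hint
    have hF1 := D.F_lt_one (b + (x - y))
    nlinarith [D.f_pos y]
  have hlim : Filter.Tendsto (fun b => D.F b * D.f x) Filter.atTop (nhds (D.f x)) := by
    have h := D.tendsto_top.mul_const (D.f x)
    simpa using h
  have := le_of_tendsto hlim (Filter.eventually_atTop.2 ⟨y, key⟩)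
  linarith

end CostDist

namespace CostDist
variable (D : CostDist)

lemma G1_unimodal (t : ℝ) :
    ∃ x0 : ℝ, StrictMonoOn (fun x => x * (1 - D.F x) + t * D.F x) (Set.Iic x0) ∧
      StrictAntiOn (fun x => x * (1 - D.F x) + t * D.F x) (Set.Ici x0) := by
  set G : ℝ → ℝ := fun x => x * (1 - D.F x) + t * D.F x with hG
  set q : ℝ → ℝ := fun x => (1 - D.F x) / D.f x + t - x with hq
  have hq_anti : StrictAnti q := by
    intro x y hxy
    have h1 : (1 - D.F y) / D.f y ≤ (1 - D.F x) / D.f x :=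
      (div_le_div_iff₀ (D.f_pos y) (D.f_pos x)).2 (D.ratio1mF hxy.le)
    show (1 - D.F y) / D.f y + t - y < (1 - D.F x) / D.f x + t - x
    linarith
  have hq_cont : Continuous q :=
    (((continuous_const.sub D.F_cont).div D.f_cont fun x => (D.f_pos x).ne').add
      continuous_const).sub continuous_id
  have hratio_pos : ∀ x, 0 < (1 - D.F x) / D.f x := fun x =>
    div_pos (by linarith [D.F_lt_one x]) (D.f_pos x)
  set b : ℝ := t + (1 - D.F t) / D.f t + 1 with hb
  have htb : t < b := by have := hratio_pos t; rw [hb]; linarith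
  have hqt : 0 < q t := by
    show 0 < (1 - D.F t) / D.f t + t - t
    have := hratio_pos t; linarith
  have hqb : q b < 0 := by
    have h1 : (1 - D.F b) / D.f b ≤ (1 - D.F t) / D.f t :=
      (div_le_div_iff₀ (D.f_pos b) (D.f_pos t)).2 (D.ratio1mF htb.le)
    show (1 - D.F b) / D.f b + t - b < 0
    rw [hb] at h1 ⊢
    linarith
  obtain ⟨x0, -, hx0⟩ := intermediate_value_Icc' htb.le hq_cont.continuousOn
    (Set.mem_Icc.2 ⟨hqb.le, hqt.le⟩)
  have hderiv : ∀ x, HasDerivAt G ((1 - D.F x) + (t - x) * D.f x) x := by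
    intro x
    have h1 : HasDerivAt (fun x : ℝ => x * (1 - D.F x))
        (1 * (1 - D.F x) + x * (0 - D.f x)) x :=
      (hasDerivAt_id x).mul ((hasDerivAt_const x (1:ℝ)).sub (D.deriv_eq x))
    have h2 : HasDerivAt (fun x : ℝ => t * D.F x) (t * D.f x) x := (D.deriv_eq x).const_mul t
    have h3 := h1.add h2
    exact h3.congr_deriv (by ring)
  have hqmul : ∀ x, D.f x * q x = (1 - D.F x) + (t - x) * D.f x := by
    intro x
    show D.f x * ((1 - D.F x) / D.f x + t - x) = (1 - D.F x) + (t - x) * D.f x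
    have h : D.f x * ((1 - D.F x) / D.f x) = 1 - D.F x := by
      rw [mul_div_assoc']
      exact mul_div_cancel_left₀ _ (D.f_pos x).ne'
    rw [show D.f x * ((1 - D.F x) / D.f x + t - x)
        = D.f x * ((1 - D.F x) / D.f x) + D.f x * (t - x) by ring, h]
    ring
  have hGcont : Continuous G :=
    ((continuous_id.mul (continuous_const.sub D.F_cont)).add (continuous_const.mul D.F_cont))
  refine ⟨x0, ?_, ?_⟩
  · refine strictMonoOn_of_deriv_pos (convex_Iic x0) hGcont.continuousOn fun x hx => ?_
    rw [interior_Iic] at hx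
    rw [(hderiv x).deriv, ← hqmul x]
    have : 0 < q x := hx0 ▸ hq_anti hx
    exact mul_pos (D.f_pos x) this
  · refine strictAntiOn_of_deriv_neg (convex_Ici x0) hGcont.continuousOn fun x hx => ?_
    rw [interior_Ici] at hx
    rw [(hderiv x).deriv, ← hqmul x]
    have : q x < 0 := hx0 ▸ hq_anti hx
    exact mul_neg_of_pos_of_neg (D.f_pos x) this

lemma G0_unimodal (t : ℝ) :
    ∃ x0 : ℝ, StrictMonoOn (fun x => -x * D.F x + t * D.F x) (Set.Iic x0) ∧
      StrictAntiOn (fun x => -x * D.F x + t * D.F x) (Set.Ici x0) := by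
  set G : ℝ → ℝ := fun x => -x * D.F x + t * D.F x with hG
  set q : ℝ → ℝ := fun x => t - x - D.F x / D.f x with hq
  have hq_anti : StrictAnti q := by
    intro x y hxy
    have h1 : D.F x / D.f x ≤ D.F y / D.f y :=
      (div_le_div_iff₀ (D.f_pos x) (D.f_pos y)).2 (D.ratioF hxy.le)
    show t - y - D.F y / D.f y < t - x - D.F x / D.f x
    linarith
  have hq_cont : Continuous q :=
    (continuous_const.sub continuous_id).sub
      (D.F_cont.div D.f_cont fun x => (D.f_pos x).ne')
  have hratio_pos : ∀ x, 0 < D.F x / D.f x := fun x => div_pos (D.F_pos x) (D.f_pos x)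
  set a : ℝ := t - D.F t / D.f t - 1 with ha
  have hat : a < t := by have := hratio_pos t; rw [ha]; linarith
  have hqa : 0 < q a := by
    have h1 : D.F a / D.f a ≤ D.F t / D.f t :=
      (div_le_div_iff₀ (D.f_pos a) (D.f_pos t)).2 (D.ratioF hat.le)
    show 0 < t - a - D.F a / D.f a
    rw [ha] at h1 ⊢
    linarith
  have hqt : q t < 0 := by
    show t - t - D.F t / D.f t < 0
    have := hratio_pos t; linarith
  obtain ⟨x0, -, hx0⟩ := intermediate_value_Icc' hat.le hq_cont.continuousOn
    (Set.mem_Icc.2 ⟨hqt.le, hqa.le⟩)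
  have hderiv : ∀ x, HasDerivAt G (-1 * D.F x + -x * D.f x + t * D.f x) x := by
    intro x
    have h1 : HasDerivAt (fun x : ℝ => -x * D.F x) (-1 * D.F x + -x * D.f x) x :=
      ((hasDerivAt_id x).neg).mul (D.deriv_eq x)
    have h2 : HasDerivAt (fun x : ℝ => t * D.F x) (t * D.f x) x := (D.deriv_eq x).const_mul t
    exact h1.add h2
  have hqmul : ∀ x, D.f x * q x = -1 * D.F x + -x * D.f x + t * D.f x := by
    intro x
    show D.f x * (t - x - D.F x / D.f x) = -1 * D.F x + -x * D.f x + t * D.f x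
    have h : D.f x * (D.F x / D.f x) = D.F x := by
      rw [mul_div_assoc']
      exact mul_div_cancel_left₀ _ (D.f_pos x).ne'
    rw [show D.f x * (t - x - D.F x / D.f x)
        = D.f x * (t - x) - D.f x * (D.F x / D.f x) by ring, h]
    ring
  have hGcont : Continuous G :=
    ((continuous_id.neg.mul D.F_cont).add (continuous_const.mul D.F_cont))
  refine ⟨x0, ?_, ?_⟩
  · refine strictMonoOn_of_deriv_pos (convex_Iic x0) hGcont.continuousOn fun x hx => ?_
    rw [interior_Iic] at hx
    rw [(hderiv x).deriv, ← hqmul x]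
    have : 0 < q x := hx0 ▸ hq_anti hx
    exact mul_pos (D.f_pos x) this
  · refine strictAntiOn_of_deriv_neg (convex_Ici x0) hGcont.continuousOn fun x hx => ?_
    rw [interior_Ici] at hx
    rw [(hderiv x).deriv, ← hqmul x]
    have : q x < 0 := hx0 ▸ hq_anti hx
    exact mul_neg_of_pos_of_neg (D.f_pos x) this

end CostDist


/-- Expected responsiveness of the classifier `δ = (δ₁, δ₀)` at precision `φ`. -/
noncomputable def rho (d1 d0 phi : ℝ) : ℝ := (d1 + d0 - 1) * (2 * phi - 1)

/-- The designer's expected payoff `EU_D(δ | r)`. -/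
noncomputable def EUD (D : CostDist) (phi A1 A0 B1 B0 r d1 d0 : ℝ) : ℝ :=
  D.F (r * rho d1 d0 phi) *
      (phi * (A1 * d1 + A0 * (1 - d1)) + (1 - phi) * (A0 * d0 + A1 * (1 - d0))) +
    (1 - D.F (r * rho d1 d0 phi)) *
      (phi * (B1 * d0 + B0 * (1 - d0)) + (1 - phi) * (B0 * d1 + B1 * (1 - d1)))

/-- A voter's expected payoff conditional on complying, `EU₁(r | γ)`. -/
noncomputable def EU1 (D : CostDist) (phi t gamma d1 d0 r : ℝ) : ℝ :=
  -gamma + r * rho d1 d0 phi * (1 - D.F (r * rho d1 d0 phi)) + t * D.F (r * rho d1 d0 phi)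

/-- A voter's expected payoff conditional on not complying, `EU₀(r)`. -/
noncomputable def EU0 (D : CostDist) (phi t d1 d0 r : ℝ) : ℝ :=
  -(r * rho d1 d0 phi) * D.F (r * rho d1 d0 phi) + t * D.F (r * rho d1 d0 phi)

/-- A voter's overall payoff `V(r | γ) = max(EU₁(r | γ), EU₀(r))`. -/
noncomputable def V (D : CostDist) (phi t gamma d1 d0 r : ℝ) : ℝ :=
  max (EU1 D phi t gamma d1 d0 r) (EU0 D phi t d1 d0 r)

/-- Strict quasiconcavity of a real function on a set. -/
def StrictQuasiconcaveOn (s : Set ℝ) (g : ℝ → ℝ) : Prop :=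
  ∀ ⦃x⦄, x ∈ s → ∀ ⦃y⦄, y ∈ s → x ≠ y → ∀ ⦃a b : ℝ⦄, 0 < a → 0 < b → a + b = 1 →
    min (g x) (g y) < g (a * x + b * y)

/-- Strict quasiconvexity of a real function on a set. -/
def StrictQuasiconvexOn (s : Set ℝ) (g : ℝ → ℝ) : Prop :=
  ∀ ⦃x⦄, x ∈ s → ∀ ⦃y⦄, y ∈ s → x ≠ y → ∀ ⦃a b : ℝ⦄, 0 < a → 0 < b → a + b = 1 →
    g (a * x + b * y) < max (g x) (g y)


lemma unimodal_quasiconcave {G : ℝ → ℝ} {x0 : ℝ} (hmono : StrictMonoOn G (Set.Iic x0))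
    (hanti : StrictAntiOn G (Set.Ici x0)) : StrictQuasiconcaveOn Set.univ G := by
  intro x _ y _ hxy a b ha hb hab
  have hA : a = 1 - b := by linarith
  subst hA
  rcases hxy.lt_or_gt with h | h
  · exact unimodal_key hmono hanti x y h _
      (by nlinarith [mul_pos hb (sub_pos.2 h)]) (by nlinarith [mul_pos ha (sub_pos.2 h)])
  · have := unimodal_key hmono hanti y x h ((1 - b) * x + b * y)
      (by nlinarith [mul_pos ha (sub_pos.2 h)]) (by nlinarith [mul_pos hb (sub_pos.2 h)])
    rw [min_comm]
    exact this

/-- `(r, δ)` is an equilibrium: `r` maximizes the median voter's payoff given `δ`,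
and `δ ∈ [0,1]²` maximizes the designer's payoff given `r`. -/
def IsEquilibrium (D : CostDist) (phi t A1 A0 B1 B0 gammaMu r d1 d0 : ℝ) : Prop :=
  d1 ∈ Set.Icc (0 : ℝ) 1 ∧ d0 ∈ Set.Icc (0 : ℝ) 1 ∧
  (∀ r' : ℝ, V D phi t gammaMu d1 d0 r' ≤ V D phi t gammaMu d1 d0 r) ∧
  (∀ e1 ∈ Set.Icc (0 : ℝ) 1, ∀ e0 ∈ Set.Icc (0 : ℝ) 1,
    EUD D phi A1 A0 B1 B0 r e1 e0 ≤ EUD D phi A1 A0 B1 B0 r d1 d0)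

/-- **Proposition 5.** For a non-null classifier, each of the voter's conditional payoffs
`EU₁(· | γ)` and `EU₀` is strictly quasiconcave in `r` and has a unique (finite) global
maximizer; for a null classifier both are constant in `r`. -/
theorem prop5 (D : CostDist) (phi t gamma d1 d0 : ℝ)
    (hphi : phi ∈ Set.Ioc (1 / 2 : ℝ) 1) (ht : 0 ≤ t)
    (hd1 : d1 ∈ Set.Icc (0 : ℝ) 1) (hd0 : d0 ∈ Set.Icc (0 : ℝ) 1) :
    (rho d1 d0 phi ≠ 0 →
      StrictQuasiconcaveOn Set.univ (EU1 D phi t gamma d1 d0) ∧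
      StrictQuasiconcaveOn Set.univ (EU0 D phi t d1 d0) ∧
      (∃! r : ℝ, ∀ r' : ℝ, EU1 D phi t gamma d1 d0 r' ≤ EU1 D phi t gamma d1 d0 r) ∧
      (∃! r : ℝ, ∀ r' : ℝ, EU0 D phi t d1 d0 r' ≤ EU0 D phi t d1 d0 r)) ∧
    (rho d1 d0 phi = 0 →
      (∀ r r' : ℝ, EU1 D phi t gamma d1 d0 r = EU1 D phi t gamma d1 d0 r') ∧
      (∀ r r' : ℝ, EU0 D phi t d1 d0 r = EU0 D phi t d1 d0 r')) := by
  constructor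
  · intro hrho
    obtain ⟨x1, hm1, ha1⟩ := D.G1_unimodal t
    obtain ⟨x0g, hm0, ha0⟩ := D.G0_unimodal t
    obtain ⟨r1, hrm1, hra1⟩ := comp_unimodal (c := -gamma) hrho hm1 ha1
    obtain ⟨r0, hrm0, hra0⟩ := comp_unimodal (c := (0 : ℝ)) hrho hm0 ha0
    have he1 : EU1 D phi t gamma d1 d0 =
        fun r => -gamma + (fun x => x * (1 - D.F x) + t * D.F x) (r * rho d1 d0 phi) := by
      funext r
      simp only [EU1]
      ring
    have he0 : EU0 D phi t d1 d0 =
        fun r => 0 + (fun x => -x * D.F x + t * D.F x) (r * rho d1 d0 phi) := by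
      funext r
      simp only [EU0]
      ring
    rw [he1, he0]
    exact ⟨unimodal_quasiconcave hrm1 hra1, unimodal_quasiconcave hrm0 hra0,
      unimodal_max' hrm1 hra1, unimodal_max' hrm0 hra0⟩
  · intro hrho
    constructor <;> intro r r' <;> simp [EU1, EU0, hrho]
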